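/- For every integer m ≥ 0, the multiple zeta value ζ(2,{1}_m) = ∑_{n₁ > n₂ > ⋯ > n_{m+1} ≥ 1} 1/(n₁² n₂ ⋯ n_{m+1}) equals ζ(m+2). -/

import Mathlib

/-- Multiple harmonic number (strictly decreasing indices). -/
noncomputable def mh : List ℝ → ℕ → ℝ
  | [], _ => 1
  | s :: t, n => ∑ k ∈ Finset.Icc 1 n, (1 / (k : ℝ) ^ s) * mh t (k - 1)

/-- Multiple zeta value. -/
noncomputable def mzv : List ℝ → ℝ
  | [] => 1
  | s :: t => ∑' k : ℕ, (1 / ((k : ℝ) + 1) ^ s) * mh t k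

/-- Riemann zeta value (real series). -/
noncomputable def rz (s : ℝ) : ℝ := ∑' n : ℕ, 1 / ((n : ℝ) + 1) ^ s

open Real Set MeasureTheory Filter

namespace Z21

noncomputable def e (m n : ℕ) : ℝ := mh (List.replicate m 1) n

lemma e_zero (n : ℕ) : e 0 n = 1 := rfl

lemma e_succ (m n : ℕ) : e (m+1) n = ∑ k ∈ Finset.Icc 1 n, (1/(k:ℝ)) * e m (k-1) := by
  simp [e, List.replicate_succ, mh, Real.rpow_one]

lemma e_nonneg (m n : ℕ) : 0 ≤ e m n := by
  induction m generalizing n with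
  | zero => rw [e_zero]; norm_num
  | succ m ih =>
    rw [e_succ]
    refine Finset.sum_nonneg fun k hk => mul_nonneg (by positivity) (ih _)

lemma e_le (m n : ℕ) : e m n ≤ ((n : ℝ) + 1) ^ m := by
  induction m generalizing n with
  | zero => rw [e_zero]; norm_num
  | succ m ih =>
    rw [e_succ]
    calc ∑ k ∈ Finset.Icc 1 n, (1/(k:ℝ)) * e m (k-1)
        ≤ ∑ k ∈ Finset.Icc 1 n, ((n:ℝ)+1)^m := by
          refine Finset.sum_le_sum fun k hk => ?_
          simp only [Finset.mem_Icc] at hk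
          have h1 : (1:ℝ)/(k:ℝ) ≤ 1 := by
            rw [div_le_one (by exact_mod_cast hk.1)]
            exact_mod_cast hk.1
          calc (1/(k:ℝ)) * e m (k-1) ≤ 1 * e m (k-1) :=
                mul_le_mul_of_nonneg_right h1 (e_nonneg _ _)
            _ = e m (k-1) := one_mul _
            _ ≤ ((k-1 : ℕ) + 1 : ℝ)^m := ih _
            _ ≤ ((n:ℝ)+1)^m := by
                refine pow_le_pow_left₀ (by positivity) ?_ m
                have h2 : (k - 1 : ℕ) ≤ n := le_trans (Nat.sub_le _ _) hk.2
                have h3 : ((k-1:ℕ):ℝ) ≤ (n:ℝ) := Nat.cast_le.mpr h2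
                linarith
      _ = n * ((n:ℝ)+1)^m := by
          rw [Finset.sum_const, Nat.card_Icc]; simp [nsmul_eq_mul]
      _ ≤ ((n:ℝ)+1)^(m+1) := by
          rw [pow_succ, mul_comm]
          refine mul_le_mul_of_nonneg_left ?_ (by positivity)
          linarith [Nat.cast_nonneg (α := ℝ) n]

lemma summable_aux (m : ℕ) {r : ℝ} (h0 : 0 ≤ r) (h1 : r < 1) :
    Summable (fun n : ℕ => ((n:ℝ)+1)^m * r^n) := by
  rcases eq_or_ne r 0 with rfl | hr
  · refine (summable_nat_add_iff 1).mp ?_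
    convert summable_zero with n
    simp
  · have hs : Summable (fun n : ℕ => (n:ℝ)^m * r^n) :=
      summable_pow_mul_geometric_of_norm_lt_one m
        (by rwa [Real.norm_eq_abs, abs_of_nonneg h0])
    have hs2 := (hs.comp_injective (add_left_injective 1)).mul_left r⁻¹
    refine hs2.congr fun n => ?_
    simp only [Function.comp]
    push_cast
    rw [pow_succ]
    field_simp

noncomputable def F (m : ℕ) (x : ℝ) : ℝ := ∑' n : ℕ, e m n / ((n:ℝ)+1) * x^(n+1)

lemma hasDerivAt_term (m n : ℕ) (y : ℝ) :
    HasDerivAt (fun z : ℝ => e m n / ((n:ℝ)+1) * z^(n+1)) (e m n * y^n) y := by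
  have h := (hasDerivAt_pow (n+1) y).const_mul (e m n / ((n:ℝ)+1))
  refine h.congr_deriv ?_
  have hn : ((n:ℝ)+1) ≠ 0 := by positivity
  push_cast
  field_simp

lemma deriv_bound (m n : ℕ) {r : ℝ} (y : ℝ) (hy : |y| ≤ r) :
    ‖e m n * y^n‖ ≤ ((n:ℝ)+1)^m * r^n := by
  rw [norm_mul, norm_pow, Real.norm_eq_abs, Real.norm_eq_abs,
    abs_of_nonneg (e_nonneg m n)]
  have h0 : (0:ℝ) ≤ r := le_trans (abs_nonneg y) hy
  exact mul_le_mul (e_le m n) (pow_le_pow_left₀ (abs_nonneg y) hy n)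
    (by positivity) (by positivity)

lemma hasDerivAt_F (m : ℕ) {x : ℝ} (hx : |x| < 1) :
    HasDerivAt (F m) (∑' n : ℕ, e m n * x^n) x := by
  set r := (1 + |x|)/2 with hrdef
  have hr0 : 0 < r := by positivity
  have hr1 : r < 1 := by rw [hrdef]; linarith
  have hxr : |x| < r := by rw [hrdef]; linarith
  have hmem : ∀ y : ℝ, y ∈ Metric.ball (0:ℝ) r ↔ |y| < r := by
    intro y; rw [Metric.mem_ball, Real.dist_eq, sub_zero]
  exact hasDerivAt_tsum_of_isPreconnected (summable_aux m hr0.le hr1)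
    Metric.isOpen_ball (convex_ball (0:ℝ) r).isPreconnected
    (fun n y _ => hasDerivAt_term m n y)
    (fun n y hy => deriv_bound m n y (le_of_lt ((hmem y).mp hy)))
    ((hmem 0).mpr (by simpa using hr0))
    (by simp only [zero_pow (Nat.succ_ne_zero _), mul_zero]; exact summable_zero)
    ((hmem x).mpr hxr)

lemma summable_coef (m : ℕ) {x : ℝ} (hx : |x| < 1) :
    Summable (fun k : ℕ =>
      ‖(if k = 0 then (0:ℝ) else e m (k-1) / k) * x^k‖) := by
  refine Summable.of_nonneg_of_le (fun k => norm_nonneg _) (fun k => ?_)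
    (summable_aux m (abs_nonneg x) hx)
  rw [norm_mul, norm_pow, Real.norm_eq_abs, Real.norm_eq_abs]
  refine mul_le_mul ?_ le_rfl (by positivity) (by positivity)
  rcases Nat.eq_zero_or_pos k with rfl | hk
  · simp
  · have hk0 : k ≠ 0 := Nat.pos_iff_ne_zero.mp hk
    rw [if_neg hk0, abs_div, abs_of_nonneg (e_nonneg _ _), Nat.abs_cast]
    have h1 : e m (k-1) / k ≤ e m (k-1) := by
      apply div_le_self (e_nonneg _ _)
      exact_mod_cast hk
    refine le_trans h1 (le_trans (e_le _ _) (pow_le_pow_left₀ (by positivity) ?_ m))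
    have h2 : ((k-1:ℕ):ℝ) ≤ (k:ℝ) := Nat.cast_le.mpr (Nat.sub_le _ _)
    linarith

lemma cauchy (m : ℕ) {x : ℝ} (hx : |x| < 1) :
    ∑' n : ℕ, e (m+1) n * x^n = F m x * (1-x)⁻¹ := by
  set f : ℕ → ℝ := fun k => (if k = 0 then (0:ℝ) else e m (k-1)/k) * x^k with hf
  have hfs : Summable (fun k => ‖f k‖) := summable_coef m hx
  have hgs : Summable (fun j : ℕ => ‖x^j‖) := by
    simpa [Real.norm_eq_abs, abs_pow] using
      summable_geometric_of_lt_one (abs_nonneg x) hx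
  have key := tsum_mul_tsum_eq_tsum_sum_range_of_summable_norm hfs hgs
  have h1 : ∑' k, f k = F m x := by
    rw [Summable.tsum_eq_zero_add hfs.of_norm]
    have hz : f 0 = 0 := by simp [hf]
    rw [hz, zero_add]
    refine tsum_congr fun n => ?_
    simp only [hf, Nat.succ_ne_zero, if_false, Nat.add_sub_cancel]
    push_cast
    ring
  have h2 : ∑' j : ℕ, x^j = (1-x)⁻¹ :=
    tsum_geometric_of_norm_lt_one (by rwa [Real.norm_eq_abs])
  have h3 : ∀ n : ℕ, ∑ k ∈ Finset.range (n+1), f k * x^(n-k) = e (m+1) n * x^n := by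
    intro n
    have hterm : ∀ k ∈ Finset.range (n+1),
        f k * x^(n-k) = (if k = 0 then (0:ℝ) else e m (k-1)/k) * x^n := by
      intro k hk
      simp only [Finset.mem_range] at hk
      rw [hf]
      simp only []
      rw [mul_assoc, ← pow_add]
      congr 2
      omega
    rw [Finset.sum_congr rfl hterm, ← Finset.sum_mul]
    congr 1
    rw [e_succ]
    have hrange : Finset.range (n+1) = insert 0 (Finset.Icc 1 n) := by
      ext k; simp only [Finset.mem_range, Finset.mem_insert, Finset.mem_Icc]; omega
    rw [hrange, Finset.sum_insert (by simp), if_pos rfl, zero_add]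
    refine Finset.sum_congr rfl fun k hk => ?_
    simp only [Finset.mem_Icc] at hk
    rw [if_neg (by omega)]
    rw [div_eq_mul_inv, one_div, mul_comm]
  calc ∑' n : ℕ, e (m+1) n * x^n
      = ∑' n : ℕ, ∑ k ∈ Finset.range (n+1), f k * x^(n-k) :=
        (tsum_congr h3).symm
    _ = (∑' k, f k) * (∑' j : ℕ, x^j) := key.symm
    _ = F m x * (1-x)⁻¹ := by rw [h1, h2]

lemma F_zero_eq {x : ℝ} (hx : |x| < 1) : F 0 x = -Real.log (1 - x) := by
  have h := Real.hasSum_pow_div_log_of_abs_lt_one hx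
  rw [F, ← h.tsum_eq]
  refine tsum_congr fun n => ?_
  rw [e_zero]
  push_cast
  ring

lemma F_at_zero (m : ℕ) : F m 0 = 0 := by
  simp [F]

lemma hasDerivAt_neg_log (y : ℝ) (h : (1:ℝ) - y ≠ 0) :
    HasDerivAt (fun z : ℝ => -Real.log (1 - z)) ((1-y)⁻¹) y := by
  have h1 : HasDerivAt (fun z : ℝ => (1:ℝ) - z) (-1) y := (hasDerivAt_id y).const_sub 1
  have h2 := (Real.hasDerivAt_log h).comp y h1
  refine h2.neg.congr_deriv ?_
  ring

lemma F_eq (m : ℕ) : ∀ {x : ℝ}, 0 ≤ x → x < 1 →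
    F m x = (-Real.log (1-x))^(m+1) / (Nat.factorial (m+1) : ℝ) := by
  induction m with
  | zero =>
    intro x h0 h1
    rw [F_zero_eq (by rw [abs_of_nonneg h0]; exact h1)]
    simp
  | succ m ih =>
    intro x h0 h1
    have hIcc : ∀ y ∈ Icc (0:ℝ) x, |y| < 1 := fun y hy => by
      rw [abs_of_nonneg hy.1]; exact lt_of_le_of_lt hy.2 h1
    have hIco : ∀ y ∈ Ico (0:ℝ) x, |y| < 1 := fun y hy =>
      hIcc y (Ico_subset_Icc_self hy)
    have key := eq_of_has_deriv_right_eq (a := 0) (b := x)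
      (f := F (m+1)) (f' := fun y => F m y * (1-y)⁻¹)
      (g := fun y => (-Real.log (1-y))^(m+2) / (Nat.factorial (m+2) : ℝ))
      (fun y hy => by
        have hd := hasDerivAt_F (m+1) (hIco y hy)
        rw [cauchy m (hIco y hy)] at hd
        exact hd.hasDerivWithinAt)
      (fun y hy => by
        have hy1 : (1:ℝ) - y ≠ 0 := by
          have := (hIco y hy); rw [abs_lt] at this
          have := this.2; intro hc; linarith
        have hp := ((hasDerivAt_neg_log y hy1).pow (m+2)).div_const
          (Nat.factorial (m+2) : ℝ)
        have hval : (↑(m+2) * (-Real.log (1-y))^(m+2-1) * (1-y)⁻¹) /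
            (Nat.factorial (m+2) : ℝ) = F m y * (1-y)⁻¹ := by
          have hyIco := hIco y hy
          rw [ih hy.1 (lt_trans hy.2 h1)]
          rw [Nat.factorial_succ (m+1)]
          have hfac : (Nat.factorial (m+1) : ℝ) ≠ 0 := by
            exact_mod_cast (Nat.factorial_pos (m+1)).ne'
          push_cast
          field_simp
          ring
        rw [hval] at hp
        exact hp.hasDerivWithinAt)
      (fun y hy => ((hasDerivAt_F (m+1) (hIcc y hy)).continuousAt).continuousWithinAt)
      (by
        refine ContinuousOn.div_const ?_ _
        refine ContinuousOn.pow ?_ _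
        refine ContinuousOn.neg ?_
        refine ContinuousOn.log ?_ ?_
        · exact (continuous_const.sub continuous_id).continuousOn
        · intro y hy
          have := hIcc y hy; rw [abs_lt] at this
          have := this.2; intro hc; linarith)
      (by
        rw [F_at_zero]
        simp)
    exact key x ⟨h0, le_rfl⟩



open scoped ENNReal

lemma lintegral_image_deriv {s : Set ℝ} {f f' : ℝ → ℝ} (hs : MeasurableSet s)
    (hf' : ∀ x ∈ s, HasDerivWithinAt f (f' x) s x) (hf : InjOn f s) (g : ℝ → ℝ≥0∞) :
    ∫⁻ x in f '' s, g x = ∫⁻ x in s, ENNReal.ofReal |f' x| * g (f x) := by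
  simpa only [ContinuousLinearMap.det_toSpanSingleton] using
    MeasureTheory.lintegral_image_eq_lintegral_abs_det_fderiv_mul volume hs
      (fun x hx => (hf' x hx).hasFDerivWithinAt) hf g

lemma image_one_sub : (fun x : ℝ => 1 - x) '' Ioo 0 1 = Ioo 0 1 := by
  ext y; constructor
  · rintro ⟨x, hx, rfl⟩
    exact ⟨by simp; linarith [hx.2], by simp; linarith [hx.1]⟩
  · intro hy
    exact ⟨1 - y, ⟨by linarith [hy.2], by linarith [hy.1]⟩, by ring⟩

lemma image_exp_neg : (fun t : ℝ => Real.exp (-t)) '' Ioi 0 = Ioo 0 1 := by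
  ext y; constructor
  · rintro ⟨t, ht, rfl⟩
    refine ⟨Real.exp_pos _, ?_⟩
    rw [← Real.exp_zero]
    exact Real.exp_lt_exp.mpr (by simpa using ht)
  · intro hy
    refine ⟨-Real.log y, ?_, by simp [Real.exp_log hy.1]⟩
    simpa using Real.log_neg hy.1 hy.2

lemma integrableOn_gamma (p : ℕ) {b : ℝ} (hb : 0 < b) :
    IntegrableOn (fun t : ℝ => t^p * Real.exp (-(b*t))) (Ioi (0:ℝ)) := by
  have h0 : IntegrableOn (fun t : ℝ => Real.exp (-t) * t ^ (((p:ℝ)+1)-1)) (Ioi (0:ℝ)) :=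
    Real.GammaIntegral_convergent (by positivity)
  have h1 : IntegrableOn (fun t : ℝ => Real.exp (-t) * t^p) (Ioi (0:ℝ)) := by
    refine h0.congr_fun (fun t ht => ?_) measurableSet_Ioi
    rw [show ((p:ℝ)+1)-1 = ((p:ℕ):ℝ) by push_cast; ring]; simp only [Real.rpow_natCast]
  have h2 := (integrableOn_Ioi_comp_mul_left_iff
      (fun t : ℝ => Real.exp (-t) * t^p) 0 hb).mpr (by simpa using h1)
  have h3 : IntegrableOn (fun x : ℝ => ((b:ℝ)^p)⁻¹ * (Real.exp (-(b*x)) * (b*x)^p))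
      (Ioi (0:ℝ)) := h2.const_mul ((b:ℝ)^p)⁻¹
  refine IntegrableOn.congr_fun h3 (fun t ht => ?_) measurableSet_Ioi
  have hbp : (b:ℝ)^p ≠ 0 := by positivity
  rw [mul_pow]
  field_simp

lemma integral_gamma (p : ℕ) {b : ℝ} (hb : 0 < b) :
    ∫ t in Ioi (0:ℝ), t^p * Real.exp (-(b*t)) = (Nat.factorial p : ℝ) / b^(p+1) := by
  have h := Real.integral_rpow_mul_exp_neg_mul_Ioi (a := (p:ℝ)+1) (by positivity) hb
  rw [show ((p:ℝ)+1)-1 = ((p:ℕ):ℝ) by push_cast; ring] at h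
  simp_rw [Real.rpow_natCast] at h
  rw [Real.Gamma_nat_eq_factorial] at h
  have h2 : ∫ t in Ioi (0:ℝ), t^p * Real.exp (-(b*t))
      = ∫ t in Ioi (0:ℝ), t^p * Real.exp (-(b*t)) := rfl
  calc ∫ t in Ioi (0:ℝ), t^p * Real.exp (-(b*t)) = (1/b)^((p:ℝ)+1) * (Nat.factorial p : ℝ) := h
    _ = (Nat.factorial p : ℝ)/b^(p+1) := by
        rw [show ((p:ℝ)+1) = ((p+1:ℕ):ℝ) by push_cast; ring, Real.rpow_natCast]
        rw [one_div, inv_pow]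
        ring

lemma step7 (m j : ℕ) :
    ∫⁻ x in Ioo (0:ℝ) 1,
        ENNReal.ofReal ((-Real.log x)^(m+1) / (Nat.factorial (m+1) : ℝ) * x^j)
      = ENNReal.ofReal (1 / ((j:ℝ)+1)^(m+2)) := by
  have hderiv : ∀ t ∈ Ioi (0:ℝ),
      HasDerivWithinAt (fun t : ℝ => Real.exp (-t)) (-Real.exp (-t)) (Ioi 0) t := by
    intro t _
    simpa [Function.comp_def] using ((Real.hasDerivAt_exp (-t)).comp t (hasDerivAt_neg t)).hasDerivWithinAt
  have hinj : InjOn (fun t : ℝ => Real.exp (-t)) (Ioi 0) := fun a _ b _ h =>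
    neg_inj.mp (Real.exp_injective h)
  rw [← image_exp_neg, lintegral_image_deriv measurableSet_Ioi hderiv hinj]
  have hfac : (0:ℝ) < (Nat.factorial (m+1) : ℝ) := by exact_mod_cast Nat.factorial_pos (m+1)
  have hpt : ∀ t ∈ Ioi (0:ℝ),
      ENNReal.ofReal |(-Real.exp (-t))| *
        ENNReal.ofReal ((-Real.log (Real.exp (-t)))^(m+1) / (Nat.factorial (m+1) : ℝ)
          * (Real.exp (-t))^j)
      = ENNReal.ofReal (t^(m+1) * Real.exp (-(((j:ℝ)+1)*t)) / (Nat.factorial (m+1) : ℝ)) := by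
    intro t _
    rw [abs_neg, abs_of_pos (Real.exp_pos _), ← ENNReal.ofReal_mul (Real.exp_pos _).le]
    congr 1
    rw [Real.log_exp, neg_neg]
    have hexp : Real.exp (-t) * Real.exp (-t)^j = Real.exp (-(((j:ℝ)+1)*t)) := by
      rw [← Real.exp_nat_mul, ← Real.exp_add]
      congr 1
      push_cast
      ring
    calc Real.exp (-t) * (t^(m+1) / (Nat.factorial (m+1) : ℝ) * (Real.exp (-t))^j)
        = (Real.exp (-t) * Real.exp (-t)^j) * t^(m+1) / (Nat.factorial (m+1) : ℝ) := by ring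
      _ = t^(m+1) * Real.exp (-(((j:ℝ)+1)*t)) / (Nat.factorial (m+1) : ℝ) := by
          rw [hexp]; ring
  rw [setLIntegral_congr_fun measurableSet_Ioi hpt]
  have hb : (0:ℝ) < (j:ℝ)+1 := by positivity
  have hint := (integrableOn_gamma (m+1) hb).div_const (Nat.factorial (m+1) : ℝ)
  have hnn : 0 ≤ᵐ[volume.restrict (Ioi (0:ℝ))]
      fun t => t^(m+1) * Real.exp (-(((j:ℝ)+1)*t)) / (Nat.factorial (m+1) : ℝ) := by
    refine (ae_restrict_iff' measurableSet_Ioi).mpr (ae_of_all _ fun t ht => ?_)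
    have ht0 : (0:ℝ) < t := ht
    positivity
  rw [← MeasureTheory.ofReal_integral_eq_lintegral_ofReal hint hnn]
  congr 1
  rw [integral_div, integral_gamma (m+1) hb]
  rw [div_div]
  rw [div_eq_div_iff (by positivity) (by positivity)]
  ring

lemma big (m : ℕ) :
    (∑' k : ℕ, ENNReal.ofReal (e m k / ((k:ℝ)+1)^2))
      = ∑' k : ℕ, ENNReal.ofReal (1/((k:ℝ)+1)^(m+2)) := by
  have step1 : ∀ k : ℕ, ENNReal.ofReal (e m k / ((k:ℝ)+1)^2)
      = ∫⁻ x in Ioo (0:ℝ) 1, ENNReal.ofReal (e m k / ((k:ℝ)+1) * x^k) := by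
    intro k
    have hInt : IntegrableOn (fun x : ℝ => e m k / ((k:ℝ)+1) * x^k) (Ioo 0 1) :=
      ((continuous_const.mul (continuous_pow k)).integrableOn_Icc).mono_set
        Ioo_subset_Icc_self
    have hnn : 0 ≤ᵐ[volume.restrict (Ioo (0:ℝ) 1)]
        fun x : ℝ => e m k / ((k:ℝ)+1) * x^k := by
      refine (ae_restrict_iff' measurableSet_Ioo).mpr (ae_of_all _ fun x hx => ?_)
      exact mul_nonneg (div_nonneg (e_nonneg m k) (by positivity))
        (pow_nonneg hx.1.le k)
    rw [← MeasureTheory.ofReal_integral_eq_lintegral_ofReal hInt hnn]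
    congr 1
    rw [MeasureTheory.integral_const_mul, ← integral_Ioc_eq_integral_Ioo,
      ← intervalIntegral.integral_of_le zero_le_one, integral_pow,
      one_pow, zero_pow (Nat.succ_ne_zero k), sub_zero, sq]
    have hk : ((k:ℝ)+1) ≠ 0 := by positivity
    push_cast
    rw [div_mul_div_comm, mul_one]
  have meas1 : ∀ k : ℕ, Measurable fun x : ℝ =>
      ENNReal.ofReal (e m k / ((k:ℝ)+1) * x^k) := by
    intro k
    exact ENNReal.measurable_ofReal.comp ((measurable_id.pow_const k).const_mul _)
  rw [tsum_congr step1, ← lintegral_tsum (fun k => (meas1 k).aemeasurable)]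
  have step3 : ∀ x ∈ Ioo (0:ℝ) 1,
      (∑' k : ℕ, ENNReal.ofReal (e m k / ((k:ℝ)+1) * x^k))
        = ENNReal.ofReal ((-Real.log (1-x))^(m+1)/(Nat.factorial (m+1):ℝ) / x) := by
    intro x hx
    have hx0 : (0:ℝ) < x := hx.1
    have hx1 : x < 1 := hx.2
    have hnn : ∀ k : ℕ, 0 ≤ e m k / ((k:ℝ)+1) * x^k := fun k =>
      mul_nonneg (div_nonneg (e_nonneg m k) (by positivity)) (pow_nonneg hx0.le k)
    have hsum : Summable (fun k : ℕ => e m k / ((k:ℝ)+1) * x^k) := by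
      refine Summable.of_nonneg_of_le hnn (fun k => ?_) (summable_aux m hx0.le hx1)
      refine mul_le_mul ?_ le_rfl (pow_nonneg hx0.le k) (by positivity)
      calc e m k / ((k:ℝ)+1) ≤ e m k :=
            div_le_self (e_nonneg m k) (by linarith [Nat.cast_nonneg (α := ℝ) k])
        _ ≤ ((k:ℝ)+1)^m := e_le m k
    rw [← ENNReal.ofReal_tsum_of_nonneg hnn hsum]
    congr 1
    have hF : F m x = x * ∑' k : ℕ, e m k / ((k:ℝ)+1) * x^k := by
      rw [F, ← tsum_mul_left]
      refine tsum_congr fun n => ?_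
      rw [pow_succ]
      ring
    rw [F_eq m hx0.le hx1] at hF
    rw [eq_div_iff (ne_of_gt hx0), mul_comm]
    exact hF.symm
  rw [setLIntegral_congr_fun measurableSet_Ioo step3]
  have step4 : (∫⁻ x in Ioo (0:ℝ) 1,
        ENNReal.ofReal ((-Real.log (1-x))^(m+1)/(Nat.factorial (m+1):ℝ)/x))
      = ∫⁻ x in Ioo (0:ℝ) 1,
        ENNReal.ofReal ((-Real.log x)^(m+1)/(Nat.factorial (m+1):ℝ)/(1-x)) := by
    conv_lhs => rw [← image_one_sub]
    rw [lintegral_image_deriv (f := fun x : ℝ => 1 - x) (f' := fun _ => (-1:ℝ))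
      measurableSet_Ioo
      (fun x _ => by
        simpa using ((hasDerivAt_id x).const_sub 1).hasDerivWithinAt)
      (fun a _ b _ h => by dsimp at h; linarith)]
    simp only [abs_neg, abs_one, ENNReal.ofReal_one, one_mul, sub_sub_cancel]
  rw [step4]
  have step5 : ∀ x ∈ Ioo (0:ℝ) 1,
      ENNReal.ofReal ((-Real.log x)^(m+1)/(Nat.factorial (m+1):ℝ)/(1-x))
        = ∑' j : ℕ, ENNReal.ofReal
            ((-Real.log x)^(m+1)/(Nat.factorial (m+1):ℝ) * x^j) := by
    intro x hx
    have hl : 0 ≤ -Real.log x := by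
      have := Real.log_nonpos hx.1.le hx.2.le
      linarith
    have hc : 0 ≤ (-Real.log x)^(m+1)/(Nat.factorial (m+1):ℝ) := by positivity
    have hsum := (summable_geometric_of_lt_one hx.1.le hx.2).mul_left
      ((-Real.log x)^(m+1)/(Nat.factorial (m+1):ℝ))
    rw [← ENNReal.ofReal_tsum_of_nonneg
      (fun j => mul_nonneg hc (pow_nonneg hx.1.le j)) hsum]
    congr 1
    rw [tsum_mul_left, tsum_geometric_of_lt_one hx.1.le hx.2, div_eq_mul_inv _ (1-x)]
  rw [setLIntegral_congr_fun measurableSet_Ioo step5]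
  have meas2 : ∀ j : ℕ, Measurable fun x : ℝ =>
      ENNReal.ofReal ((-Real.log x)^(m+1)/(Nat.factorial (m+1):ℝ) * x^j) := by
    intro j
    refine ENNReal.measurable_ofReal.comp ?_
    exact (((Real.measurable_log.neg.pow_const (m+1)).div_const _).mul
      (measurable_id.pow_const j))
  rw [lintegral_tsum (fun j => (meas2 j).aemeasurable)]
  exact tsum_congr (step7 m)

end Z21

theorem stmt_12 (m : ℕ) :
    mzv (2 :: List.replicate m 1) = rz ((m : ℝ) + 2) := by
  have hL : mzv (2 :: List.replicate m 1) = ∑' k : ℕ, Z21.e m k / ((k:ℝ)+1)^2 := by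
    rw [mzv]
    refine tsum_congr fun k => ?_
    have h2 : ((k:ℝ)+1)^(2:ℝ) = ((k:ℝ)+1)^(2:ℕ) := by
      rw [← Real.rpow_natCast ((k:ℝ)+1) 2]
      norm_num
    rw [h2, one_div_mul_eq_div]
    rfl
  have hR : rz ((m:ℝ)+2) = ∑' k : ℕ, 1/((k:ℝ)+1)^(m+2) := by
    rw [rz]
    refine tsum_congr fun n => ?_
    congr 1
    rw [← Real.rpow_natCast ((n:ℝ)+1) (m+2)]
    push_cast
    ring_nf
  have hsumR : Summable (fun k : ℕ => 1/((k:ℝ)+1)^(m+2)) := by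
    have h := (Real.summable_one_div_nat_pow (p := m+2)).mpr (by omega)
    have h2 := h.comp_injective (add_left_injective 1)
    refine h2.congr fun n => ?_
    simp only [Function.comp]
    push_cast
    ring
  have key := Z21.big m
  have hnnL : ∀ k : ℕ, 0 ≤ Z21.e m k/((k:ℝ)+1)^2 := fun k =>
    div_nonneg (Z21.e_nonneg m k) (by positivity)
  have hnnR : ∀ k : ℕ, (0:ℝ) ≤ 1/((k:ℝ)+1)^(m+2) := fun k => by positivity
  have hofR : ENNReal.ofReal (∑' k : ℕ, 1/((k:ℝ)+1)^(m+2))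
      = ∑' k : ℕ, ENNReal.ofReal (1/((k:ℝ)+1)^(m+2)) :=
    ENNReal.ofReal_tsum_of_nonneg hnnR hsumR
  have h1 : (∑' k : ℕ, ENNReal.ofReal (Z21.e m k/((k:ℝ)+1)^2)).toReal
      = ∑' k : ℕ, Z21.e m k/((k:ℝ)+1)^2 := by
    rw [ENNReal.tsum_toReal_eq (fun k => ENNReal.ofReal_ne_top)]
    exact tsum_congr fun k => ENNReal.toReal_ofReal (hnnL k)
  have h2 : (∑' k : ℕ, ENNReal.ofReal ((1:ℝ)/((k:ℝ)+1)^(m+2))).toReal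
      = ∑' k : ℕ, 1/((k:ℝ)+1)^(m+2) := by
    rw [ENNReal.tsum_toReal_eq (fun k => ENNReal.ofReal_ne_top)]
    exact tsum_congr fun k => ENNReal.toReal_ofReal (hnnR k)
  rw [hL, hR, ← h1, ← h2, key]
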